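/- Let f : ℝ^n → ℝ be continuously differentiable, η > 0, and let {x_k} be a sequence converging to a critical point x_* with f(x_k) ≥ f(x_*) for all k, satisfying for each k the sufficient decrease f(x_{k+1}) ≤ f(x_k) − η α_k ‖∇f(x_k)‖², the step-length identity ‖x_{k+1} − x_k‖ = 2 α_k ‖∇f(x_k)‖ / √(1 + α_k² ‖∇f(x_k)‖²), the step-size bounds 0 < α_min ≤ α_k ≤ α_max, and the gradient bound ‖∇f(x_k)‖ ≤ M. Suppose f satisfies the Kurdyka–Łojasiewicz inequality at x_* with exponent θ ∈ (1/2, 1): there are a neighborhood U of x_* containing all x_k and a constant C₁ > 0 with |f(x) − f(x_*)|^θ ≤ C₁ ‖∇f(x)‖ for all x ∈ U. Then the sequence converges sublinearly: there exists γ > 0 such that ‖x_k − x_*‖ ≤ γ k^{−(1−θ)/(2θ−1)} for all sufficiently large k. -/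

import Mathlib

open Filter

/-- Concavity inequality: for `0 ≤ s ≤ t`, `0 < t`, `0 ≤ p ≤ 1`,
`p * t^(p-1) * (t - s) ≤ t^p - s^p`. -/
lemma kl_aux_concave {s t p : ℝ} (hs : 0 ≤ s) (hst : s ≤ t) (ht : 0 < t)
    (hp0 : 0 ≤ p) (hp1 : p ≤ 1) :
    p * t ^ (p - 1) * (t - s) ≤ t ^ p - s ^ p := by
  have hu0 : (0:ℝ) ≤ s / t := div_nonneg hs ht.le
  have h1 : s ^ p = t ^ p * (s / t) ^ p := by
    rw [← Real.mul_rpow ht.le hu0, mul_div_cancel₀ _ ht.ne']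
  have hb : (s / t) ^ p ≤ 1 + p * (s / t - 1) := by
    have := rpow_one_add_le_one_add_mul_self (s := s / t - 1) (by linarith) hp0 hp1
    simpa using this
  have htp : (0:ℝ) < t ^ p := Real.rpow_pos_of_pos ht p
  have h2 : s ^ p ≤ t ^ p * (1 + p * (s / t - 1)) := by
    rw [h1]; exact mul_le_mul_of_nonneg_left hb htp.le
  have h3 : t ^ (p - 1) = t ^ p / t := by
    rw [Real.rpow_sub ht, Real.rpow_one]
  rw [h3]
  have h4 : t ^ p * (1 + p * (s / t - 1)) = t ^ p - p * (t ^ p / t) * (t - s) := by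
    field_simp; ring
  linarith [h4 ▸ h2]

/-- Convexity inequality: for `0 < s ≤ t`, `0 < β < 1`,
`t^(-β) + β * t^(-β-1) * (t - s) ≤ s^(-β)`. -/
lemma kl_aux_convex {s t β : ℝ} (hs : 0 < s) (hst : s ≤ t) (hβ0 : 0 < β) (hβ1 : β < 1) :
    t ^ (-β) + β * t ^ (-β - 1) * (t - s) ≤ s ^ (-β) := by
  have ht : 0 < t := lt_of_lt_of_le hs hst
  set u := s / t with hu
  have hu0 : 0 < u := div_pos hs ht
  have hu1 : u ≤ 1 := (div_le_one ht).2 hst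
  set w := 1 - u with hw
  have hw0 : 0 ≤ w := by simp [hw]; linarith
  have hw1 : w < 1 := by simp [hw]; linarith
  -- Bernoulli: u^β = (1 - w)^β ≤ 1 - β w
  have hb : u ^ β ≤ 1 - β * w := by
    have := rpow_one_add_le_one_add_mul_self (s := -w) (by linarith) hβ0.le hβ1.le
    have h1 : (1 : ℝ) + -w = u := by simp [hw]
    rw [h1] at this; linarith
  have hβw : β * w < 1 := lt_of_le_of_lt (by nlinarith) hw1
  have hpos : 0 < 1 - β * w := by linarith
  have hub : 0 < u ^ β := Real.rpow_pos_of_pos hu0 β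
  -- 1 + β w ≤ (1 - β w)⁻¹ ≤ (u^β)⁻¹ = u^(-β)
  have h2 : 1 + β * w ≤ (1 - β * w)⁻¹ := by
    rw [← one_div]
    rw [le_div_iff₀ hpos]; nlinarith [sq_nonneg (β * w)]
  have h3 : (1 - β * w)⁻¹ ≤ (u ^ β)⁻¹ := inv_anti₀ hub hb
  have h4 : 1 + β * w ≤ u ^ (-β) := by
    rw [Real.rpow_neg hu0.le]; linarith
  -- multiply by t^(-β)
  have htb : 0 < t ^ (-β) := Real.rpow_pos_of_pos ht _
  have h5 : s ^ (-β) = t ^ (-β) * u ^ (-β) := by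
    rw [← Real.mul_rpow ht.le hu0.le, mul_div_cancel₀ _ ht.ne']
  have h6 : t ^ (-β) * (1 + β * w) ≤ s ^ (-β) := by
    rw [h5]; exact mul_le_mul_of_nonneg_left h4 htb.le
  have h7 : t ^ (-β - 1) = t ^ (-β) / t := by
    rw [Real.rpow_sub ht, Real.rpow_one]
  have h8 : t ^ (-β) * (1 + β * w) = t ^ (-β) + β * (t ^ (-β) / t) * (t - s) := by
    rw [hw, hu]; field_simp
  rw [h7]; linarith [h8 ▸ h6]

set_option maxHeartbeats 2000000

/-- under the Kurdyka–Łojasiewicz inequality with exponent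
`θ ∈ (1/2, 1)`, the iterates converge sublinearly:
`‖x_k − x⋆‖ ≤ γ k^{−(1−θ)/(2θ−1)}` for all sufficiently large `k`. -/
theorem kl_sublinear_convergence_rate
    {n : ℕ} (f : EuclideanSpace ℝ (Fin n) → ℝ)
    (hf : ContDiff ℝ 1 f)
    (η αmin αmax M : ℝ) (hη : 0 < η) (hαmin : 0 < αmin)
    (x : ℕ → EuclideanSpace ℝ (Fin n)) (α : ℕ → ℝ)
    (xstar : EuclideanSpace ℝ (Fin n))
    (hlim : Tendsto x atTop (nhds xstar))
    (hcrit : gradient f xstar = 0)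
    (hxf : ∀ k, f xstar ≤ f (x k))
    (hdec : ∀ k, f (x (k + 1)) ≤ f (x k) - η * α k * ‖gradient f (x k)‖ ^ 2)
    (hstep : ∀ k, ‖x (k + 1) - x k‖
      = 2 * α k * ‖gradient f (x k)‖
          / Real.sqrt (1 + (α k) ^ 2 * ‖gradient f (x k)‖ ^ 2))
    (hα : ∀ k, αmin ≤ α k) (hα' : ∀ k, α k ≤ αmax)
    (hgM : ∀ k, ‖gradient f (x k)‖ ≤ M)
    (θ : ℝ) (hθ : θ ∈ Set.Ioo (1 / 2 : ℝ) 1)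
    (U : Set (EuclideanSpace ℝ (Fin n))) (hU : U ∈ nhds xstar)
    (hxU : ∀ k, x k ∈ U)
    (C₁ : ℝ) (hC₁ : 0 < C₁)
    (hKL : ∀ y ∈ U, |f y - f xstar| ^ θ ≤ C₁ * ‖gradient f y‖) :
    ∃ γ > (0 : ℝ), ∃ N : ℕ, ∀ k ≥ N,
      ‖x k - xstar‖ ≤ γ * (k : ℝ) ^ (-(1 - θ) / (2 * θ - 1)) := by
  obtain ⟨hθ0, hθ1⟩ := hθ
  have hθ0' : 0 < θ := by linarith
  set e : ℕ → ℝ := fun k => f (x k) - f xstar with he_def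
  set g : ℕ → ℝ := fun k => ‖gradient f (x k)‖ with hg_def
  have hg0 : ∀ k, 0 ≤ g k := fun k => norm_nonneg _
  have he0 : ∀ k, 0 ≤ e k := fun k => sub_nonneg.2 (hxf k)
  have hαk : ∀ k, 0 < α k := fun k => lt_of_lt_of_le hαmin (hα k)
  have hαmax : 0 < αmax := lt_of_lt_of_le (hαk 0) (hα' 0)
  set β : ℝ := 2 * θ - 1 with hβ_def
  have hβ0 : 0 < β := by rw [hβ_def]; linarith
  have hβ1 : β < 1 := by rw [hβ_def]; linarith
  have hdec' : ∀ k, e (k + 1) ≤ e k - η * α k * g k ^ 2 := by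
    intro k
    have := hdec k
    simp only [he_def, hg_def]
    linarith
  have hmono : ∀ k, e (k + 1) ≤ e k := by
    intro k
    have h := hdec' k
    nlinarith [mul_pos hη (hαk k), sq_nonneg (g k)]
  have hkl : ∀ k, e k ^ θ ≤ C₁ * g k := by
    intro k
    have := hKL (x k) (hxU k)
    rwa [abs_of_nonneg (he0 k)] at this
  -- e k = 0 implies g k = 0 and e (k+1) = 0
  have hzero : ∀ k, e k = 0 → g k = 0 ∧ e (k + 1) = 0 := by
    intro k hk
    have h := hdec' k
    rw [hk] at h
    have h1 := he0 (k + 1)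
    have h2 : η * α k * g k ^ 2 ≤ 0 := by linarith
    have hg : g k = 0 := by
      by_contra hne
      have hgk : 0 < g k := lt_of_le_of_ne (hg0 k) (Ne.symm hne)
      have : 0 < η * α k * g k ^ 2 := mul_pos (mul_pos hη (hαk k)) (pow_pos hgk 2)
      linarith
    refine ⟨hg, le_antisymm ?_ h1⟩
    rw [hg] at h
    simpa using h
  have hgpos : ∀ k, 0 < e k → 0 < g k := by
    intro k hk
    rcases (hg0 k).lt_or_eq with h | h
    · exact h
    · exfalso
      have := hkl k
      rw [← h] at this
      have := Real.rpow_pos_of_pos hk θ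
      linarith
  -- recursion constant
  set c : ℝ := η * αmin / C₁ ^ 2 with hc_def
  have hc : 0 < c := by positivity
  have hrec : ∀ k, e (k + 1) ≤ e k - c * e k ^ (2 * θ) := by
    intro k
    have h2 : e k ^ (2 * θ) = (e k ^ θ) ^ 2 := by
      rw [← Real.rpow_natCast (e k ^ θ) 2, ← Real.rpow_mul (he0 k)]
      norm_num
      congr 1
      ring
    have h3 : (e k ^ θ) ^ 2 ≤ C₁ ^ 2 * g k ^ 2 := by
      have := hkl k
      nlinarith [Real.rpow_nonneg (he0 k) θ]
    have h4 : c * e k ^ (2 * θ) ≤ η * αmin * g k ^ 2 := by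
      rw [h2, hc_def, div_mul_eq_mul_div, div_le_iff₀ (by positivity)]
      nlinarith [mul_pos hη hαmin]
    have h5 : η * αmin * g k ^ 2 ≤ η * α k * g k ^ 2 :=
      mul_le_mul_of_nonneg_right
        (mul_le_mul_of_nonneg_left (hα k) hη.le) (sq_nonneg (g k))
    linarith [hdec' k]
  -- growth of e^(-β)
  have hstep3 : ∀ k, 0 < e (k + 1) → e k ^ (-β) + β * c ≤ e (k + 1) ^ (-β) := by
    intro k hk1
    have hk0 : 0 < e k := lt_of_lt_of_le hk1 (hmono k)
    have hcv := kl_aux_convex hk1 (hmono k) hβ0 hβ1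
    have hexp : e k ^ (-β - 1) = e k ^ (-(2 * θ)) := by
      congr 1; rw [hβ_def]; ring
    have hmul : e k ^ (-(2 * θ)) * e k ^ (2 * θ) = 1 := by
      rw [← Real.rpow_add hk0]; norm_num
    have h6 : c ≤ e k ^ (-β - 1) * (e k - e (k + 1)) := by
      have h7 : c * e k ^ (2 * θ) ≤ e k - e (k + 1) := by linarith [hrec k]
      have h8 : 0 < e k ^ (-β - 1) := Real.rpow_pos_of_pos hk0 _
      have h9 : e k ^ (-β - 1) * e k ^ (2 * θ) = 1 := by rw [hexp]; exact hmul
      calc c = e k ^ (-β - 1) * (c * e k ^ (2 * θ)) := by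
              rw [show e k ^ (-β - 1) * (c * e k ^ (2 * θ))
                  = c * (e k ^ (-β - 1) * e k ^ (2 * θ)) from by ring, h9, mul_one]
        _ ≤ e k ^ (-β - 1) * (e k - e (k + 1)) :=
              mul_le_mul_of_nonneg_left h7 h8.le
    nlinarith [hcv, mul_le_mul_of_nonneg_left h6 hβ0.le]
  have hind : ∀ k, 0 < e k → β * c * k ≤ e k ^ (-β) := by
    intro k
    induction k with
    | zero => intro _; simpa using Real.rpow_nonneg (he0 0) (-β)
    | succ k ih =>
      intro hk1
      have hk0 : 0 < e k := lt_of_lt_of_le hk1 (hmono k)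
      have h1 := ih hk0
      have h2 := hstep3 k hk1
      push_cast
      nlinarith
  -- rate: for k ≥ 1, e k ≤ (β c k)^(-1/β)
  have hrate : ∀ k : ℕ, 1 ≤ k → e k ≤ (β * c * k) ^ (-1 / β) := by
    intro k hk
    have hk0 : (0:ℝ) < β * c * k := by
      have : (1:ℝ) ≤ (k:ℝ) := by exact_mod_cast hk
      nlinarith [mul_pos hβ0 hc]
    rcases (he0 k).lt_or_eq with h | h
    · have h1 := hind k h
      have h2 : (e k ^ (-β)) ^ (-1 / β) ≤ (β * c * k) ^ (-1 / β) :=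
        Real.rpow_le_rpow_of_nonpos hk0 h1 (by
          apply div_nonpos_of_nonpos_of_nonneg <;> linarith)
      have h3 : (e k ^ (-β)) ^ (-1 / β) = e k := by
        rw [← Real.rpow_mul (he0 k)]
        rw [show (-β) * (-1 / β) = 1 by field_simp]
        exact Real.rpow_one _
      linarith [h3 ▸ h2]
    · rw [← h]
      exact Real.rpow_nonneg hk0.le _
  -- telescoping constant
  set c' : ℝ := (1 - θ) * (η * αmin) / C₁ with hc'_def
  have hc' : 0 < c' := by
    have : 0 < 1 - θ := by linarith
    positivity
  have hstep2 : ∀ k, c' * g k ≤ e k ^ (1 - θ) - e (k + 1) ^ (1 - θ) := by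
    intro k
    rcases (he0 k).lt_or_eq with h0 | h0
    · have hgk := hgpos k h0
      have hcon := kl_aux_concave (he0 (k + 1)) (hmono k) h0
        (p := 1 - θ) (by linarith) (by linarith)
      have hexp : e k ^ (1 - θ - 1) = e k ^ (-θ) := by congr 1; ring
      rw [hexp] at hcon
      -- e k ^ (-θ) ≥ (C₁ * g k)⁻¹
      have h1 : (C₁ * g k)⁻¹ ≤ e k ^ (-θ) := by
        rw [Real.rpow_neg (he0 k)]
        exact inv_anti₀ (Real.rpow_pos_of_pos h0 θ) (hkl k)
      have h2 : η * αmin * g k ^ 2 ≤ e k - e (k + 1) := by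
        have h2a : η * αmin * g k ^ 2 ≤ η * α k * g k ^ 2 :=
          mul_le_mul_of_nonneg_right
            (mul_le_mul_of_nonneg_left (hα k) hη.le) (sq_nonneg (g k))
        linarith [hdec' k]
      have h3 : (1 - θ) * ((C₁ * g k)⁻¹ * (η * αmin * g k ^ 2))
          ≤ (1 - θ) * (e k ^ (-θ) * (e k - e (k + 1))) := by
        apply mul_le_mul_of_nonneg_left _ (by linarith : (0:ℝ) ≤ 1 - θ)
        have hp1 : 0 < (C₁ * g k)⁻¹ := by positivity
        have he1 : 0 ≤ e k - e (k + 1) := by linarith [hmono k]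
        calc (C₁ * g k)⁻¹ * (η * αmin * g k ^ 2)
            ≤ (C₁ * g k)⁻¹ * (e k - e (k + 1)) := mul_le_mul_of_nonneg_left h2 hp1.le
          _ ≤ e k ^ (-θ) * (e k - e (k + 1)) := mul_le_mul_of_nonneg_right h1 he1
      have h4 : c' * g k = (1 - θ) * ((C₁ * g k)⁻¹ * (η * αmin * g k ^ 2)) := by
        rw [hc'_def]; field_simp
      rw [h4]
      calc (1 - θ) * ((C₁ * g k)⁻¹ * (η * αmin * g k ^ 2))
          ≤ (1 - θ) * (e k ^ (-θ) * (e k - e (k + 1))) := h3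
        _ = (1 - θ) * e k ^ (-θ) * (e k - e (k + 1)) := by ring
        _ ≤ e k ^ (1 - θ) - e (k + 1) ^ (1 - θ) := hcon
    · obtain ⟨hg, he1⟩ := hzero k h0.symm
      rw [hg, he1, ← h0]
      simp
  have htel : ∀ k m, k ≤ m →
      c' * (∑ j ∈ Finset.Ico k m, g j) ≤ e k ^ (1 - θ) - e m ^ (1 - θ) := by
    intro k m hkm
    induction m, hkm using Nat.le_induction with
    | base => simp
    | succ m hkm ih =>
      rw [Finset.sum_Ico_succ_top hkm, mul_add]
      linarith [hstep2 m]
  -- step length bound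
  have hΔ : ∀ j, ‖x (j + 1) - x j‖ ≤ 2 * αmax * g j := by
    intro j
    rw [hstep j]
    have h1 : 1 ≤ Real.sqrt (1 + α j ^ 2 * ‖gradient f (x j)‖ ^ 2) := by
      rw [Real.one_le_sqrt]
      nlinarith [sq_nonneg (α j), sq_nonneg ‖gradient f (x j)‖,
        mul_nonneg (sq_nonneg (α j)) (sq_nonneg ‖gradient f (x j)‖)]
    calc 2 * α j * ‖gradient f (x j)‖ / Real.sqrt (1 + α j ^ 2 * ‖gradient f (x j)‖ ^ 2)
        ≤ 2 * α j * ‖gradient f (x j)‖ :=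
          div_le_self (mul_nonneg (mul_nonneg (by norm_num) (hαk j).le) (norm_nonneg _)) h1
      _ ≤ 2 * αmax * g j := by
          have := hα' j
          have := hg0 j
          simp only [hg_def]
          nlinarith [hαk j]
  -- distance bound
  have hdist : ∀ k, ‖x k - xstar‖ ≤ 2 * αmax / c' * e k ^ (1 - θ) := by
    intro k
    have key : ∀ m, k ≤ m →
        ‖x k - xstar‖ - 2 * αmax / c' * e k ^ (1 - θ) ≤ ‖x m - xstar‖ := by
      intro m hkm
      have h1 : ‖x k - xstar‖ ≤ ‖x m - xstar‖ + ∑ j ∈ Finset.Ico k m, ‖x (j + 1) - x j‖ := by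
        induction m, hkm using Nat.le_induction with
        | base => simp
        | succ m hkm ih =>
          rw [Finset.sum_Ico_succ_top hkm]
          have htri : ‖x m - xstar‖ ≤ ‖x (m + 1) - x m‖ + ‖x (m + 1) - xstar‖ := by
            have : x m - xstar = -(x (m + 1) - x m) + (x (m + 1) - xstar) := by abel
            rw [this]
            exact (norm_add_le _ _).trans (by rw [norm_neg])
          linarith
      have h2 : ∑ j ∈ Finset.Ico k m, ‖x (j + 1) - x j‖
          ≤ 2 * αmax * ∑ j ∈ Finset.Ico k m, g j :=
        (Finset.sum_le_sum fun j _ => hΔ j).trans (by rw [Finset.mul_sum])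
      have h3 : c' * ∑ j ∈ Finset.Ico k m, g j ≤ e k ^ (1 - θ) := by
        have := htel k m hkm
        have := Real.rpow_nonneg (he0 m) (1 - θ)
        linarith
      have h4 : ∑ j ∈ Finset.Ico k m, g j ≤ e k ^ (1 - θ) / c' :=
        (le_div_iff₀ hc').2 (by linarith)
      have h5 : 2 * αmax * ∑ j ∈ Finset.Ico k m, g j ≤ 2 * αmax / c' * e k ^ (1 - θ) := by
        have h6 := mul_le_mul_of_nonneg_left h4 (by positivity : (0:ℝ) ≤ 2 * αmax)
        calc 2 * αmax * ∑ j ∈ Finset.Ico k m, g j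
            ≤ 2 * αmax * (e k ^ (1 - θ) / c') := h6
          _ = 2 * αmax / c' * e k ^ (1 - θ) := by ring
      linarith
    have hlim' : Tendsto (fun m => ‖x m - xstar‖) atTop (nhds 0) :=
      tendsto_iff_norm_sub_tendsto_zero.mp hlim
    have := ge_of_tendsto hlim' (eventually_atTop.2 ⟨k, key⟩)
    linarith
  -- assemble
  refine ⟨2 * αmax / c' * (β * c) ^ (-(1 - θ) / β), by positivity, 1, fun k hk => ?_⟩
  have hk1 : (1:ℝ) ≤ (k:ℝ) := by exact_mod_cast hk
  have hkpos : (0:ℝ) < (k:ℝ) := by linarith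
  have hbck : (0:ℝ) < β * c * k := by positivity
  have h1 : e k ^ (1 - θ) ≤ ((β * c * k) ^ (-1 / β)) ^ (1 - θ) :=
    Real.rpow_le_rpow (he0 k) (hrate k hk) (by linarith)
  have h2 : ((β * c * k) ^ (-1 / β)) ^ (1 - θ) = (β * c * k) ^ (-(1 - θ) / β) := by
    rw [← Real.rpow_mul hbck.le]
    congr 1
    field_simp
  have h3 : (β * c * k) ^ (-(1 - θ) / β)
      = (β * c) ^ (-(1 - θ) / β) * (k:ℝ) ^ (-(1 - θ) / β) :=
    Real.mul_rpow (by positivity) hkpos.le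
  have h4 : ‖x k - xstar‖ ≤ 2 * αmax / c' * ((β * c) ^ (-(1 - θ) / β) * (k:ℝ) ^ (-(1 - θ) / β)) := by
    have := hdist k
    rw [h2, h3] at h1
    calc ‖x k - xstar‖ ≤ 2 * αmax / c' * e k ^ (1 - θ) := hdist k
      _ ≤ 2 * αmax / c' * ((β * c) ^ (-(1 - θ) / β) * (k:ℝ) ^ (-(1 - θ) / β)) :=
          mul_le_mul_of_nonneg_left h1 (by positivity)
  calc ‖x k - xstar‖
      ≤ 2 * αmax / c' * ((β * c) ^ (-(1 - θ) / β) * (k:ℝ) ^ (-(1 - θ) / β)) := h4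
    _ = 2 * αmax / c' * (β * c) ^ (-(1 - θ) / β) * (k:ℝ) ^ (-(1 - θ) / (2 * θ - 1)) := by
        rw [hβ_def]; ring
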